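/- Let (k̃, ñ, {S_{i,j}}) be a Matrix Tiling instance with k̃ ≥ 2, and let l ≥ 0 be a real number. If some assignment to the associated projection game leaves fewer than l/2 of its edges unsatisfied, then the Matrix Tiling instance has a valid partial solution with fewer than l entries equal to ★; that is, there is a choice s_{i,j} ∈ S_{i,j} ∪ {★} for each (i,j) ∈ [k̃] × [k̃] such that for all i ∈ [k̃], j ∈ [k̃−1] with s_{i,j} ≠ ★ and s_{i,j+1} ≠ ★ one has (s_{i,j})₁ = (s_{i,j+1})₁, for all i ∈ [k̃−1], j ∈ [k̃] with s_{i,j} ≠ ★ and s_{i+1,j} ≠ ★ one has (s_{i,j})₂ = (s_{i+1,j})₂, and the number of (i,j) with s_{i,j} = ★ is less than l. -/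
import Mathlib

open Classical in
/-- The partial solution extracted from an assignment to the projection game. -/
noncomputable def stmt15Sol (S : ℕ → ℕ → Finset (ℕ × ℕ))
    (Egame : Finset ((ℕ × ℕ) × ((ℕ × ℕ) ⊕ (ℕ × ℕ))))
    (π : ((ℕ × ℕ) × ((ℕ × ℕ) ⊕ (ℕ × ℕ))) → (ℕ × ℕ) → (ℕ ⊕ Bool))
    (φA : ℕ × ℕ → ℕ × ℕ) (φB : (ℕ × ℕ) ⊕ (ℕ × ℕ) → ℕ ⊕ Bool)
    (i j : ℕ) : Option (ℕ × ℕ) :=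
  if φA (i, j) ∈ S i j ∧ ∀ e ∈ Egame, e.1 = (i, j) → π e (φA (i, j)) = φB e.2 then
    some (φA (i, j))
  else none

open Classical in
/-- The charging map from starred cells to unsatisfied edges. -/
noncomputable def stmt15F (k : ℕ) (S : ℕ → ℕ → Finset (ℕ × ℕ))
    (φA : ℕ × ℕ → ℕ × ℕ)
    (U : Finset ((ℕ × ℕ) × ((ℕ × ℕ) ⊕ (ℕ × ℕ))))
    (c : ℕ × ℕ) : (ℕ × ℕ) × ((ℕ × ℕ) ⊕ (ℕ × ℕ)) :=
  if φA c ∈ S c.1 c.2 then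
    (if h : (U.filter fun e => e.1 = c).Nonempty then h.choose
     else ((0, 0), Sum.inl (0, 0)))
  else
    (if ((c.1, min c.2 (k - 1)), Sum.inr (c.1, min c.2 (k - 1))) ∈ U then
      ((c.1, min c.2 (k - 1)), Sum.inr (c.1, min c.2 (k - 1)))
     else ((c.1, min c.2 (k - 1) + 1), Sum.inr (c.1, min c.2 (k - 1))))

/-- if some assignment to the projection game associated with a Matrix
Tiling instance leaves fewer than `l/2` edges unsatisfied, then the instance has a valid
partial solution with fewer than `l` entries equal to ★ (modelled by `Option`, with
`none` playing the role of ★).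
Indices are 1-based; `A = ℕ × ℕ` hosts the vertices `a_{i,j}`;
`B = (ℕ × ℕ) ⊕ (ℕ × ℕ)` hosts the vertices `Sum.inl (i, j) = b_{i+1/2, j}` and
`Sum.inr (i, j) = b_{i, j+1/2}`; `Σ_A = ℕ × ℕ` hosts `[ñ] × [ñ]` and
`Σ_B = ℕ ⊕ Bool` hosts `[ñ]` plus the two extra symbols `Sum.inr true = ■`,
`Sum.inr false = ◆`. -/
theorem stmt_15 (k n : ℕ) (hk : 2 ≤ k) (hn : 1 ≤ n)
    (S : ℕ → ℕ → Finset (ℕ × ℕ))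
    (hS : ∀ i ∈ Finset.Icc 1 k, ∀ j ∈ Finset.Icc 1 k, ∀ p ∈ S i j,
      p.1 ∈ Finset.Icc 1 n ∧ p.2 ∈ Finset.Icc 1 n)
    (Egame : Finset ((ℕ × ℕ) × ((ℕ × ℕ) ⊕ (ℕ × ℕ))))
    (hEgame : Egame =
      (((Finset.Icc 1 (k - 1)) ×ˢ (Finset.Icc 1 k)).biUnion fun p =>
        ({((p.1, p.2), Sum.inl p), ((p.1 + 1, p.2), Sum.inl p)} :
          Finset ((ℕ × ℕ) × ((ℕ × ℕ) ⊕ (ℕ × ℕ))))) ∪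
      (((Finset.Icc 1 k) ×ˢ (Finset.Icc 1 (k - 1))).biUnion fun p =>
        ({((p.1, p.2), Sum.inr p), ((p.1, p.2 + 1), Sum.inr p)} :
          Finset ((ℕ × ℕ) × ((ℕ × ℕ) ⊕ (ℕ × ℕ))))))
    (π : ((ℕ × ℕ) × ((ℕ × ℕ) ⊕ (ℕ × ℕ))) → (ℕ × ℕ) → (ℕ ⊕ Bool))
    (hπ : π = fun e σ =>
      match e.2 with
      | Sum.inl zt =>
          if σ ∈ S e.1.1 e.1.2 then Sum.inl σ.2
          else if zt.1 < e.1.1 then Sum.inr true else Sum.inr false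
      | Sum.inr zt =>
          if σ ∈ S e.1.1 e.1.2 then Sum.inl σ.1
          else if zt.2 < e.1.2 then Sum.inr true else Sum.inr false)
    (l : ℝ) (hl : 0 ≤ l)
    (φA : ℕ × ℕ → ℕ × ℕ) (φB : (ℕ × ℕ) ⊕ (ℕ × ℕ) → ℕ ⊕ Bool)
    (hunsat : ((Egame.filter fun e => π e (φA e.1) ≠ φB e.2).card : ℝ) < l / 2) :
    ∃ sol : ℕ → ℕ → Option (ℕ × ℕ),
      (∀ i ∈ Finset.Icc 1 k, ∀ j ∈ Finset.Icc 1 k, ∀ v : ℕ × ℕ,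
        sol i j = some v → v ∈ S i j) ∧
      (∀ i ∈ Finset.Icc 1 k, ∀ j ∈ Finset.Icc 1 (k - 1), ∀ v w : ℕ × ℕ,
        sol i j = some v → sol i (j + 1) = some w → v.1 = w.1) ∧
      (∀ i ∈ Finset.Icc 1 (k - 1), ∀ j ∈ Finset.Icc 1 k, ∀ v w : ℕ × ℕ,
        sol i j = some v → sol (i + 1) j = some w → v.2 = w.2) ∧
      ((((Finset.Icc 1 k) ×ˢ (Finset.Icc 1 k)).filter fun p =>
          sol p.1 p.2 = none).card : ℝ) < l := by
  classical
  set U : Finset ((ℕ × ℕ) × ((ℕ × ℕ) ⊕ (ℕ × ℕ))) :=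
    Egame.filter fun e => π e (φA e.1) ≠ φB e.2 with hU
  have hUdef : ∀ e, e ∈ U ↔ e ∈ Egame ∧ π e (φA e.1) ≠ φB e.2 := by
    intro e; rw [hU]; exact Finset.mem_filter
  have hUE : ∀ e ∈ U, e ∈ Egame := fun e he => ((hUdef e).mp he).1
  have hsat : ∀ e ∈ Egame, e ∉ U → π e (φA e.1) = φB e.2 := by
    intro e he hne
    by_contra h
    exact hne ((hUdef e).mpr ⟨he, h⟩)
  have hk1 : 1 ≤ k - 1 := by omega
  have πinrL : ∀ i t σ, π ((i, t), Sum.inr (i, t)) σ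
      = if σ ∈ S i t then Sum.inl σ.1 else Sum.inr false := by
    intro i t σ; rw [hπ]; simp
  have πinrR : ∀ i t σ, π ((i, t + 1), Sum.inr (i, t)) σ
      = if σ ∈ S i (t + 1) then Sum.inl σ.1 else Sum.inr true := by
    intro i t σ; rw [hπ]; simp
  have πinlT : ∀ i j σ, π ((i, j), Sum.inl (i, j)) σ
      = if σ ∈ S i j then Sum.inl σ.2 else Sum.inr false := by
    intro i j σ; rw [hπ]; simp
  have πinlB : ∀ i j σ, π ((i + 1, j), Sum.inl (i, j)) σ
      = if σ ∈ S (i + 1) j then Sum.inl σ.2 else Sum.inr true := by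
    intro i j σ; rw [hπ]; simp
  have hmemInr : ∀ i t : ℕ, 1 ≤ i → i ≤ k → 1 ≤ t → t ≤ k - 1 →
      ((((i, t), Sum.inr (i, t)) : (ℕ × ℕ) × ((ℕ × ℕ) ⊕ (ℕ × ℕ))) ∈ Egame ∧
       (((i, t + 1), Sum.inr (i, t)) : (ℕ × ℕ) × ((ℕ × ℕ) ⊕ (ℕ × ℕ))) ∈ Egame) := by
    intro i t h1 h2 h3 h4
    rw [hEgame]
    constructor <;>
    · apply Finset.mem_union_right
      refine Finset.mem_biUnion.mpr ⟨(i, t), ?_, ?_⟩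
      · simp [Finset.mem_product, Finset.mem_Icc, h1, h2, h3, h4]
      · simp
  have hmemInl : ∀ i j : ℕ, 1 ≤ i → i ≤ k - 1 → 1 ≤ j → j ≤ k →
      ((((i, j), Sum.inl (i, j)) : (ℕ × ℕ) × ((ℕ × ℕ) ⊕ (ℕ × ℕ))) ∈ Egame ∧
       (((i + 1, j), Sum.inl (i, j)) : (ℕ × ℕ) × ((ℕ × ℕ) ⊕ (ℕ × ℕ))) ∈ Egame) := by
    intro i j h1 h2 h3 h4
    rw [hEgame]
    constructor <;>
    · apply Finset.mem_union_left
      refine Finset.mem_biUnion.mpr ⟨(i, j), ?_, ?_⟩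
      · simp [Finset.mem_product, Finset.mem_Icc, h1, h2, h3, h4]
      · simp
  have hE2 : ∀ e ∈ Egame, ∀ z t : ℕ, e.2 = Sum.inr (z, t) →
      e.1 = (z, t) ∨ e.1 = (z, t + 1) := by
    intro e he z t h2
    rw [hEgame] at he
    simp only [Finset.mem_union, Finset.mem_biUnion, Finset.mem_insert,
      Finset.mem_singleton, Finset.mem_product] at he
    rcases he with ⟨p, _, hpe | hpe⟩ | ⟨p, _, hpe | hpe⟩ <;> subst hpe
    · exact absurd h2 (by simp)
    · exact absurd h2 (by simp)
    · obtain rfl : p = (z, t) := by simpa using h2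
      exact Or.inl rfl
    · obtain rfl : p = (z, t) := by simpa using h2
      exact Or.inr rfl
  set sol := stmt15Sol S Egame π φA φB with hsol
  have hsolsome : ∀ i j v, sol i j = some v →
      v = φA (i, j) ∧ φA (i, j) ∈ S i j ∧
        ∀ e ∈ Egame, e.1 = (i, j) → π e (φA (i, j)) = φB e.2 := by
    intro i j v hv
    rw [hsol] at hv
    unfold stmt15Sol at hv
    split_ifs at hv with h
    exact ⟨(Option.some.inj hv).symm, h⟩
  refine ⟨sol, ?_, ?_, ?_, ?_⟩
  · intro i _ j _ v hv
    obtain ⟨rfl, h1, _⟩ := hsolsome i j v hv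
    exact h1
  · intro i hi j hj v w hv hw
    simp only [Finset.mem_Icc] at hi hj
    obtain ⟨rfl, h1, h2⟩ := hsolsome i j v hv
    obtain ⟨rfl, h3, h4⟩ := hsolsome i (j + 1) w hw
    obtain ⟨heL, heR⟩ := hmemInr i j hi.1 hi.2 hj.1 hj.2
    have e1 := h2 _ heL rfl
    have e2 := h4 _ heR rfl
    rw [πinrL, if_pos h1] at e1
    rw [πinrR, if_pos h3] at e2
    rw [← e2] at e1
    exact Sum.inl.inj e1
  · intro i hi j hj v w hv hw
    simp only [Finset.mem_Icc] at hi hj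
    obtain ⟨rfl, h1, h2⟩ := hsolsome i j v hv
    obtain ⟨rfl, h3, h4⟩ := hsolsome (i + 1) j w hw
    obtain ⟨heL, heR⟩ := hmemInl i j hi.1 hi.2 hj.1 hj.2
    have e1 := h2 _ heL rfl
    have e2 := h4 _ heR rfl
    rw [πinlT, if_pos h1] at e1
    rw [πinlB, if_pos h3] at e2
    rw [← e2] at e1
    exact Sum.inl.inj e1
  · -- the counting argument
    set bad := ((Finset.Icc 1 k) ×ˢ (Finset.Icc 1 k)).filter
      (fun p => sol p.1 p.2 = none) with hbad
    set f := stmt15F k S φA U with hf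
    have LL : ∀ c ∈ bad, f c ∈ U ∧
        (c = (f c).1 ∨ ∃ z t : ℕ, (f c).2 = Sum.inr (z, t) ∧
          (c = (z, t) ∨ c = (z, t + 1))) := by
      intro c hc
      obtain ⟨i, j⟩ := c
      obtain ⟨hcg, hcn⟩ := Finset.mem_filter.mp hc
      simp only [Finset.mem_product, Finset.mem_Icc] at hcg
      have hcn' : ¬ (φA (i, j) ∈ S i j ∧
          ∀ e ∈ Egame, e.1 = (i, j) → π e (φA (i, j)) = φB e.2) := by
        intro hgood
        rw [hsol] at hcn
        unfold stmt15Sol at hcn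
        rw [if_pos hgood] at hcn
        exact absurd hcn (by simp)
      by_cases hmem : φA (i, j) ∈ S i j
      · have hne : (U.filter fun e => e.1 = ((i, j) : ℕ × ℕ)).Nonempty := by
          have hall : ¬ ∀ e ∈ Egame, e.1 = ((i, j) : ℕ × ℕ) →
              π e (φA (i, j)) = φB e.2 := fun h => hcn' ⟨hmem, h⟩
          push_neg at hall
          obtain ⟨e, he, he1, hneq⟩ := hall
          refine ⟨e, Finset.mem_filter.mpr ⟨(hUdef e).mpr ⟨he, ?_⟩, he1⟩⟩
          rw [he1]
          exact hneq
        have hfc : f ((i, j) : ℕ × ℕ) = hne.choose := by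
          rw [hf]; unfold stmt15F
          rw [if_pos hmem, dif_pos hne]
        have hspec := hne.choose_spec
        rw [Finset.mem_filter] at hspec
        rw [hfc]
        exact ⟨hspec.1, Or.inl hspec.2.symm⟩
      · set t := min j (k - 1) with ht
        have h1t : 1 ≤ t := le_min hcg.2.1 hk1
        have htk : t ≤ k - 1 := min_le_right _ _
        have hjt : j = t ∨ j = t + 1 := by omega
        obtain ⟨heL, heR⟩ := hmemInr i t hcg.1.1 hcg.1.2 h1t htk
        have key : (((i, t), Sum.inr (i, t)) ∈ U) ∨
            (((i, t + 1), Sum.inr (i, t)) ∈ U) := by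
          by_contra hcon
          push_neg at hcon
          have hsL := hsat _ heL hcon.1
          have hsR := hsat _ heR hcon.2
          rw [πinrL] at hsL
          rw [πinrR] at hsR
          rcases hjt with hj | hj
          · have hm : φA (i, t) ∉ S i t := by rw [← hj]; exact hmem
            rw [if_neg hm] at hsL
            rw [← hsL] at hsR
            split_ifs at hsR <;> simp at hsR
          · have hm : φA (i, t + 1) ∉ S i (t + 1) := by rw [← hj]; exact hmem
            rw [if_neg hm] at hsR
            rw [← hsR] at hsL
            split_ifs at hsL <;> simp at hsL
        have hfc : f ((i, j) : ℕ × ℕ) =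
            (if ((i, t), Sum.inr (i, t)) ∈ U then ((i, t), Sum.inr (i, t))
             else ((i, t + 1), Sum.inr (i, t))) := by
          rw [hf]; unfold stmt15F
          rw [if_neg hmem]
        by_cases hL : ((i, t), Sum.inr (i, t)) ∈ U
        · rw [hfc, if_pos hL]
          refine ⟨hL, Or.inr ⟨i, t, rfl, ?_⟩⟩
          rcases hjt with hj | hj <;> [exact Or.inl (by rw [hj]);
            exact Or.inr (by rw [hj])]
        · rw [hfc, if_neg hL]
          refine ⟨key.resolve_left hL, Or.inr ⟨i, t, rfl, ?_⟩⟩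
          rcases hjt with hj | hj <;> [exact Or.inl (by rw [hj]);
            exact Or.inr (by rw [hj])]
    have hfiber : ∀ b ∈ U, (bad.filter fun c => f c = b).card ≤ 2 := by
      intro b hb
      rcases hb2 : b.2 with p | zt
      · -- vertical edge: only the A-endpoint can charge it
        have hsub : (bad.filter fun c => f c = b) ⊆ {b.1} := by
          intro c hc
          obtain ⟨hcB, hcf⟩ := Finset.mem_filter.mp hc
          rcases (LL c hcB).2 with h | ⟨z, t, hzt, _⟩
          · rw [hcf] at h
            simpa using h
          · rw [hcf, hb2] at hzt
            exact absurd hzt (by simp)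
        calc (bad.filter fun c => f c = b).card ≤ ({b.1} : Finset (ℕ × ℕ)).card :=
              Finset.card_le_card hsub
          _ ≤ 2 := by simp
      · obtain ⟨z, t⟩ := zt
        have hb1 : b.1 = (z, t) ∨ b.1 = (z, t + 1) := hE2 b (hUE b hb) z t hb2
        have hsub : (bad.filter fun c => f c = b) ⊆
            ({(z, t), (z, t + 1)} : Finset (ℕ × ℕ)) := by
          intro c hc
          obtain ⟨hcB, hcf⟩ := Finset.mem_filter.mp hc
          rcases (LL c hcB).2 with h | ⟨z', t', hzt, hor⟩
          · rw [hcf] at h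
            rcases hb1 with h1 | h1 <;> rw [h, h1] <;> simp
          · rw [hcf, hb2] at hzt
            obtain ⟨rfl, rfl⟩ : z = z' ∧ t = t' := by
              simpa [Prod.ext_iff] using hzt
            rcases hor with h1 | h1 <;> rw [h1] <;> simp
        calc (bad.filter fun c => f c = b).card
            ≤ ({(z, t), (z, t + 1)} : Finset (ℕ × ℕ)).card := Finset.card_le_card hsub
          _ ≤ 2 := Finset.card_insert_le _ _ |>.trans (by simp)
    have hcard : bad.card ≤ 2 * U.card :=
      Finset.card_le_mul_card_image_of_maps_to (fun c hc => (LL c hc).1) 2 hfiber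
    have hcardR : (bad.card : ℝ) ≤ 2 * (U.card : ℝ) := by exact_mod_cast hcard
    rw [hU] at hcardR
    calc ((((Finset.Icc 1 k) ×ˢ (Finset.Icc 1 k)).filter fun p =>
          sol p.1 p.2 = none).card : ℝ)
        = (bad.card : ℝ) := by rw [hbad]
      _ ≤ 2 * ((Egame.filter fun e => π e (φA e.1) ≠ φB e.2).card : ℝ) := hcardR
      _ < 2 * (l / 2) := by linarith
      _ = l := by ring
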